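/- In the stacked-book graph G_{m,4} = S_m □ P_4 with layers S_m(1),...,S_m(4), if M is an induced matching of size at least m, then M does not contain all the m-1 edges u_iw_i (i = 2,...,m) joining the leaves of the second layer to the corresponding leaves of the third layer. -/

import Mathlib

open SimpleGraph

/-- The star graph on `m` vertices: vertex `0` is the center, the rest are leaves. -/
def starGraph (m : ℕ) : SimpleGraph (Fin m) :=
  SimpleGraph.fromRel (fun i _ => i.val = 0)

/-- `M` is an induced matching of `G`: every element of `M` is an edge of `G`, and no two
distinct edges of `M` share an endpoint or have endpoints joined by an edge of `G`. -/
def IsInducedMatching {V : Type*} (G : SimpleGraph V) (M : Finset (Sym2 V)) : Prop :=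
  ↑M ⊆ G.edgeSet ∧
    ∀ e₁ ∈ M, ∀ e₂ ∈ M, e₁ ≠ e₂ → ∀ u ∈ e₁, ∀ v ∈ e₂, u ≠ v ∧ ¬G.Adj u v

/-- The maximum induced matching number of `G`. -/
noncomputable def im {V : Type*} (G : SimpleGraph V) : ℕ :=
  sSup {k | ∃ M : Finset (Sym2 V), IsInducedMatching G M ∧ M.card = k}

/-- The stacked-book graph `G_{m,n} = S_m □ P_n`. -/
def stackedBook (m n : ℕ) : SimpleGraph (Fin m × Fin n) :=
  starGraph m □ SimpleGraph.pathGraph n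

lemma stackedBook_adj' {m : ℕ} (x y : Fin m × Fin 4) :
    (stackedBook m 4).Adj x y ↔
      ((x.1 ≠ y.1 ∧ (x.1.val = 0 ∨ y.1.val = 0)) ∧ x.2 = y.2) ∨
        (x.1 = y.1 ∧ (x.2.val + 1 = y.2.val ∨ y.2.val + 1 = x.2.val)) := by
  simp only [stackedBook, boxProd_adj, _root_.starGraph, fromRel_adj, pathGraph_adj]
  tauto

theorem not_all_middle_edges (m : ℕ) (hm : 2 ≤ m)
    (M : Finset (Sym2 (Fin m × Fin 4))) (hM : IsInducedMatching (stackedBook m 4) M)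
    (hcard : m ≤ M.card) :
    ¬(∀ i : Fin m, i ≠ ⟨0, by omega⟩ → s((i, (1 : Fin 4)), (i, (2 : Fin 4))) ∈ M) := by
  intro h
  obtain ⟨hsub, hind⟩ := hM
  set z0 : Fin m := ⟨0, by omega⟩ with hz0
  set i1 : Fin m := ⟨1, by omega⟩ with hi1def
  have hi1 : i1 ≠ z0 := by simp [hi1def, hz0, Fin.ext_iff]
  set f : Fin m → Sym2 (Fin m × Fin 4) :=
    fun i => s((i, (1 : Fin 4)), (i, (2 : Fin 4))) with hf
  have key : ∀ e ∈ M, ∃ i, i ≠ z0 ∧ e = f i := by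
    intro e he
    by_contra hno
    push_neg at hno
    -- every endpoint of e lies in layer 0 or layer 3
    have hend : ∀ z, z ∈ e → z.2.val = 0 ∨ z.2.val = 3 := by
      intro z hz
      by_contra hc
      push_neg at hc
      have hv : z.2.val = 1 ∨ z.2.val = 2 := by have := z.2.isLt; omega
      have hmem : (z.1, z.2) ∈ f z.1 ∧ ∀ i : Fin m, (i, z.2) ∈ f i := by
        constructor
        · rcases hv with hv | hv <;> simp [hf, Sym2.mem_iff, Prod.ext_iff, Fin.ext_iff, hv]
        · intro i
          rcases hv with hv | hv <;> simp [hf, Sym2.mem_iff, Prod.ext_iff, Fin.ext_iff, hv]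
      by_cases hz1 : z.1 = z0
      · have := hind e he (f i1) (h i1 hi1) (hno i1 hi1) z hz (i1, z.2) (hmem.2 i1)
        exact this.2 (by
          rw [stackedBook_adj']
          left
          refine ⟨⟨?_, Or.inl ?_⟩, rfl⟩
          · rw [hz1]; exact Ne.symm hi1
          · rw [hz1])
      · have := hind e he (f z.1) (h z.1 hz1) (hno z.1 hz1) z hz (z.1, z.2) hmem.1
        exact this.1 rfl
    -- now analyze the edge structure
    have heE := hsub he
    induction e using Sym2.ind with
    | _ x y =>
      rw [mem_edgeSet, stackedBook_adj'] at heE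
      have hx := hend x (Sym2.mem_mk_left x y)
      have hy := hend y (Sym2.mem_mk_right x y)
      rcases heE with ⟨⟨hne1, h0⟩, heq⟩ | ⟨heq, hpath⟩
      · -- star edge within layer 0 or 3; take the non-center endpoint
        have : ∃ c : Fin m, c ≠ z0 ∧ ((c, x.2) ∈ (s(x,y) : Sym2 (Fin m × Fin 4))) := by
          rcases h0 with h0 | h0
          · refine ⟨y.1, ?_, ?_⟩
            · intro hcz; apply hne1; rw [hcz, hz0]; exact Fin.ext h0
            · rw [heq]; exact Sym2.mem_mk_right x y
          · refine ⟨x.1, ?_, ?_⟩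
            · intro hcz; apply hne1; rw [hcz, hz0]; exact (Fin.ext h0).symm
            · exact Sym2.mem_mk_left x y
        obtain ⟨c, hc, hcm⟩ := this
        -- the neighbor in the middle layer
        set w : Fin 4 := if x.2.val = 0 then 1 else 2 with hw
        have hwm : (c, w) ∈ f c := by
          rcases hx with hx | hx <;>
            simp [hf, hw, hx, Sym2.mem_iff]
        have := hind _ he (f c) (h c hc) (hno c hc) (c, x.2) hcm (c, w) hwm
        apply this.2
        rw [stackedBook_adj']
        right
        refine ⟨rfl, ?_⟩
        rcases hx with hx | hx <;> simp [hw, hx]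
      · -- path edge between layers in {0,3}: impossible
        omega
  -- M is contained in the image of f over nonzero indices
  have hsub' : M ⊆ (Finset.univ.erase z0).image f := by
    intro e he
    obtain ⟨i, hi, rfl⟩ := key e he
    exact Finset.mem_image.2 ⟨i, Finset.mem_erase.2 ⟨hi, Finset.mem_univ i⟩, rfl⟩
  have h1 : M.card ≤ ((Finset.univ.erase z0).image f).card := Finset.card_le_card hsub'
  have h2 : ((Finset.univ.erase z0).image f).card ≤ (Finset.univ.erase z0).card :=
    Finset.card_image_le
  have h3 : (Finset.univ.erase z0 : Finset (Fin m)).card = m - 1 := by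
    rw [Finset.card_erase_of_mem (Finset.mem_univ _)]
    simp
  omega
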